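/- Let G be a finite simple graph and let M be a maximum 2-matching of G one of whose connected components is a single edge (v0, u0) (a 1-path). If v0 is adjacent in G to a vertex lying on a cycle component of M, then G has a maximum 2-matching in which the number of connected components with at most two vertices is strictly smaller than in M. -/

import Mathlib

open SimpleGraph

/-- A 2-matching of `G`: a spanning subgraph (given as a graph `M ≤ G` on the same
vertex set) in which every vertex has degree at most 2. -/
def SimpleGraph.IsTwoMatching {V : Type*} (G M : SimpleGraph V) : Prop :=
  M ≤ G ∧ ∀ v : V, (M.neighborSet v).ncard ≤ 2

/-- A maximum 2-matching of `G`: a 2-matching with the maximum number of edges. -/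
def SimpleGraph.IsMaxTwoMatching {V : Type*} (G M : SimpleGraph V) : Prop :=
  G.IsTwoMatching M ∧
    ∀ M' : SimpleGraph V, G.IsTwoMatching M' → M'.edgeSet.ncard ≤ M.edgeSet.ncard

/-- A path cover of `G`, encoded as a spanning linear forest: a spanning subgraph
`P ≤ G` with maximum degree at most 2 and no cycles.  Its connected components are
exactly the vertex-disjoint paths covering all vertices of `G`. -/
def SimpleGraph.IsPathCover {V : Type*} (G P : SimpleGraph V) : Prop :=
  P ≤ G ∧ (∀ v : V, (P.neighborSet v).ncard ≤ 2) ∧ P.IsAcyclic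

/-- The size of a path cover: the number of paths, i.e. of connected components. -/
noncomputable def SimpleGraph.coverSize {V : Type*} (P : SimpleGraph V) : ℕ :=
  Nat.card P.ConnectedComponent

/-- The number of 0-paths (isolated vertices) of a path cover / 2-matching. -/
noncomputable def SimpleGraph.numZeroPaths {V : Type*} (P : SimpleGraph V) : ℕ :=
  {v : V | P.neighborSet v = ∅}.ncard

/-- The number of 1-paths (connected components consisting of a single edge,
i.e. having exactly two vertices) of a path cover. -/
noncomputable def SimpleGraph.numOnePaths {V : Type*} (P : SimpleGraph V) : ℕ :=
  {c : P.ConnectedComponent | c.supp.ncard = 2}.ncard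

/-- The number of connected components having at most two vertices. -/
noncomputable def SimpleGraph.numSmallComponents {V : Type*} (M : SimpleGraph V) : ℕ :=
  {c : M.ConnectedComponent | c.supp.ncard ≤ 2}.ncard

/-- The number of cycle components of a 2-matching: the components in which
every vertex has degree exactly 2. -/
noncomputable def SimpleGraph.numCycleComponents {V : Type*} (M : SimpleGraph V) : ℕ :=
  {c : M.ConnectedComponent | ∀ v ∈ c.supp, (M.neighborSet v).ncard = 2}.ncard

/-- Auxiliary reachability-transfer lemma: if two graphs agree on all edges not
touching a bad set `B`, and every vertex `M'`-reachable from `x` avoids `B`, then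
reachability from `x` is the same in the two graphs. -/
lemma aux_reach_transfer {V : Type*} (M M' : SimpleGraph V) (B : Set V)
    (h : ∀ a b : V, a ∉ B → (M.Adj a b ↔ M'.Adj a b)) (x : V)
    (hx : ∀ v : V, M'.Reachable x v → v ∉ B) (b : V) :
    M.Reachable x b ↔ M'.Reachable x b := by
  have claim1 : ∀ a c : V, ∀ _ : M'.Walk a c, M'.Reachable x a → M.Reachable a c := by
    intro a c p
    induction p with
    | nil => exact fun _ => Reachable.rfl
    | cons h' p ih =>
      intro hxa
      have ha := hx _ hxa
      have hadj : M.Adj _ _ := (h _ _ ha).mpr h'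
      exact hadj.reachable.trans (ih (hxa.trans h'.reachable))
  have claim2 : ∀ a c : V, ∀ _ : M.Walk a c, M'.Reachable x a → M'.Reachable x c := by
    intro a c p
    induction p with
    | nil => exact fun hxa => hxa
    | cons h' p ih =>
      intro hxa
      have ha := hx _ hxa
      have hadj : M'.Adj _ _ := (h _ _ ha).mp h'
      exact ih (hxa.trans hadj.reachable)
  constructor
  · rintro ⟨p⟩
    exact claim2 x b p Reachable.rfl
  · rintro ⟨p⟩
    exact claim1 x b p Reachable.rfl

/-- Let `M` be a maximum 2-matching of `G` one of whose components is a
single edge `(v0, u0)`.  If `v0` is adjacent in `G` to a vertex `w` lying on a cycle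
component of `M`, then `G` has a maximum 2-matching in which the number of components
with at most two vertices is strictly smaller than in `M`. -/
theorem stmt13 {V : Type*} [Fintype V] (G M : SimpleGraph V)
    (hM : G.IsMaxTwoMatching M) (v0 u0 : V)
    (hedge : M.Adj v0 u0)
    (hcomp : (M.connectedComponentMk v0).supp = {v0, u0})
    (w : V) (hadj : G.Adj v0 w)
    (hw : ∀ x : V, M.Reachable w x → (M.neighborSet x).ncard = 2) :
    ∃ M' : SimpleGraph V, G.IsMaxTwoMatching M' ∧
      M'.numSmallComponents < M.numSmallComponents := by
  classical
  obtain ⟨⟨hMG, hdeg⟩, hmax⟩ := hM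
  have hv0u0 : v0 ≠ u0 := hedge.ne
  -- the neighbor sets of v0 and u0 in M
  have hv0nb : M.neighborSet v0 = {u0} := by
    ext b
    simp only [mem_neighborSet, Set.mem_singleton_iff]
    constructor
    · intro hb
      have hmem : b ∈ (M.connectedComponentMk v0).supp := by
        rw [ConnectedComponent.mem_supp_iff, ConnectedComponent.eq]
        exact hb.symm.reachable
      rw [hcomp] at hmem
      rcases hmem with h1 | h1
      · exact absurd h1 hb.ne'
      · exact h1
    · rintro rfl; exact hedge
  have hu0nb : M.neighborSet u0 = {v0} := by
    ext b
    simp only [mem_neighborSet, Set.mem_singleton_iff]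
    constructor
    · intro hb
      have hmem : b ∈ (M.connectedComponentMk v0).supp := by
        rw [ConnectedComponent.mem_supp_iff, ConnectedComponent.eq]
        exact (hb.symm.reachable).trans hedge.symm.reachable
      rw [hcomp] at hmem
      rcases hmem with h1 | h1
      · exact h1
      · exact absurd h1 hb.ne'
    · rintro rfl; exact hedge.symm
  have hadjv0 : ∀ b : V, M.Adj v0 b → b = u0 := by
    intro b hb
    have : b ∈ M.neighborSet v0 := hb
    rwa [hv0nb] at this
  have hadju0 : ∀ b : V, M.Adj u0 b → b = v0 := by
    intro b hb
    have : b ∈ M.neighborSet u0 := hb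
    rwa [hu0nb] at this
  -- w is distinct from v0, u0
  have hww : (M.neighborSet w).ncard = 2 := hw w Reachable.rfl
  have hwv0 : w ≠ v0 := by
    rintro rfl
    rw [hv0nb, Set.ncard_singleton] at hww
    omega
  have hwu0 : w ≠ u0 := by
    rintro rfl
    rw [hu0nb, Set.ncard_singleton] at hww
    omega
  -- the two neighbors z, y of w
  obtain ⟨z, y, hzy, hnbw⟩ := Set.ncard_eq_two.mp hww
  have hMwz : M.Adj w z := by
    have : z ∈ M.neighborSet w := by rw [hnbw]; exact Set.mem_insert _ _
    exact this
  have hMwy : M.Adj w y := by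
    have : y ∈ M.neighborSet w := by rw [hnbw]; exact Set.mem_insert_iff.mpr (Or.inr rfl)
    exact this
  have hzv0 : z ≠ v0 := by
    rintro rfl
    exact hwu0 (hadjv0 w hMwz.symm)
  have hzu0 : z ≠ u0 := by
    rintro rfl
    exact hwv0 (hadju0 w hMwz.symm)
  have hyv0 : y ≠ v0 := by
    rintro rfl
    exact hwu0 (hadjv0 w hMwy.symm)
  have hzw : z ≠ w := hMwz.ne'
  -- z has a second neighbor t
  have hzz : (M.neighborSet z).ncard = 2 := hw z hMwz.reachable
  obtain ⟨t, hMzt, htw, htz⟩ : ∃ t : V, M.Adj z t ∧ t ≠ w ∧ t ≠ z := by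
    obtain ⟨a, b, hab, hnbz⟩ := Set.ncard_eq_two.mp hzz
    have hwmem : w ∈ M.neighborSet z := hMwz.symm
    rw [hnbz] at hwmem
    rcases hwmem with h1 | h1
    · refine ⟨b, ?_, ?_, ?_⟩
      · have : b ∈ M.neighborSet z := by rw [hnbz]; exact Set.mem_insert_iff.mpr (Or.inr rfl)
        exact this
      · rw [h1]; exact hab.symm
      · have : M.Adj z b := by
          have : b ∈ M.neighborSet z := by rw [hnbz]; exact Set.mem_insert_iff.mpr (Or.inr rfl)
          exact this
        exact this.ne'
    · rw [Set.mem_singleton_iff] at h1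
      refine ⟨a, ?_, ?_, ?_⟩
      · have : a ∈ M.neighborSet z := by rw [hnbz]; exact Set.mem_insert _ _
        exact this
      · rw [h1]; exact hab
      · have : M.Adj z a := by
          have : a ∈ M.neighborSet z := by rw [hnbz]; exact Set.mem_insert _ _
          exact this
        exact this.ne'
  have htu0 : t ≠ u0 := by
    rintro rfl
    exact hzv0 (hadju0 z hMzt.symm)
  have htv0 : t ≠ v0 := by
    rintro rfl
    exact hzu0 (hadjv0 z hMzt.symm)
  -- t has a second neighbor t'
  have htt2 : (M.neighborSet t).ncard = 2 := hw t (hMwz.reachable.trans hMzt.reachable)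
  obtain ⟨t', hMtt', ht'z⟩ : ∃ t' : V, M.Adj t t' ∧ t' ≠ z := by
    obtain ⟨a, b, hab, hnbt⟩ := Set.ncard_eq_two.mp htt2
    have hzmem : z ∈ M.neighborSet t := hMzt.symm
    rw [hnbt] at hzmem
    rcases hzmem with h1 | h1
    · refine ⟨b, ?_, ?_⟩
      · have : b ∈ M.neighborSet t := by rw [hnbt]; exact Set.mem_insert_iff.mpr (Or.inr rfl)
        exact this
      · rw [h1]; exact hab.symm
    · rw [Set.mem_singleton_iff] at h1
      refine ⟨a, ?_, ?_⟩
      · have : a ∈ M.neighborSet t := by rw [hnbt]; exact Set.mem_insert _ _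
        exact this
      · rw [h1]; exact hab
  have htt'ne : t ≠ t' := hMtt'.ne
  -- the new 2-matching
  set M' : SimpleGraph V :=
    SimpleGraph.fromEdgeSet ((M.edgeSet \ {s(w, z)}) ∪ {s(v0, w)}) with hM'def
  have hadj' : ∀ a b : V,
      M'.Adj a b ↔ (M.Adj a b ∧ s(a, b) ≠ s(w, z)) ∨ s(a, b) = s(v0, w) := by
    intro a b
    rw [hM'def, fromEdgeSet_adj]
    constructor
    · rintro ⟨hmem, _⟩
      rcases hmem with ⟨h1, h2⟩ | h1
      · exact Or.inl ⟨h1, h2⟩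
      · exact Or.inr h1
    · rintro (⟨h1, h2⟩ | h1)
      · exact ⟨Or.inl ⟨h1, h2⟩, h1.ne⟩
      · refine ⟨Or.inr h1, ?_⟩
        rw [Sym2.eq_iff] at h1
        rcases h1 with ⟨rfl, rfl⟩ | ⟨rfl, rfl⟩
        · exact (hwv0.symm)
        · exact hwv0
  -- key adjacencies in M'
  have hA1 : M'.Adj v0 u0 := by
    rw [hadj']
    refine Or.inl ⟨hedge, ?_⟩
    intro hq
    rw [Sym2.eq_iff] at hq
    rcases hq with ⟨h1, _⟩ | ⟨h1, _⟩
    · exact hwv0 h1.symm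
    · exact hzv0 h1.symm
  have hA2 : M'.Adj v0 w := by
    rw [hadj']; exact Or.inr rfl
  have hA3 : M'.Adj z t := by
    rw [hadj']
    refine Or.inl ⟨hMzt, ?_⟩
    intro hq
    rw [Sym2.eq_iff] at hq
    rcases hq with ⟨h1, _⟩ | ⟨_, h2⟩
    · exact hzw h1
    · exact htw h2
  have hA4 : M'.Adj t t' := by
    rw [hadj']
    refine Or.inl ⟨hMtt', ?_⟩
    intro hq
    rw [Sym2.eq_iff] at hq
    rcases hq with ⟨_, h2⟩ | ⟨h1, _⟩
    · exact ht'z h2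
    · exact htz h1
  -- neighbor sets in M'
  have hnb'v0 : M'.neighborSet v0 = {u0, w} := by
    ext b
    simp only [mem_neighborSet, Set.mem_insert_iff, Set.mem_singleton_iff]
    rw [hadj']
    constructor
    · rintro (⟨h1, _⟩ | h1)
      · exact Or.inl (hadjv0 b h1)
      · exact Or.inr (Sym2.congr_right.mp h1)
    · rintro (h | h)
      · rw [h]
        exact ((hadj' v0 u0).mp hA1)
      · rw [h]
        exact Or.inr rfl
  have hnb'w : M'.neighborSet w = {y, v0} := by
    ext b
    simp only [mem_neighborSet, Set.mem_insert_iff, Set.mem_singleton_iff]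
    rw [hadj']
    constructor
    · rintro (⟨h1, h2⟩ | h1)
      · have : b ∈ M.neighborSet w := h1
        rw [hnbw] at this
        rcases this with h3 | h3
        · exfalso; apply h2; rw [h3]
        · exact Or.inl h3
      · rw [Sym2.eq_iff] at h1
        rcases h1 with ⟨h3, _⟩ | ⟨_, h3⟩
        · exact absurd h3 hwv0
        · exact Or.inr h3
    · rintro (h | h)
      · rw [h]
        refine Or.inl ⟨hMwy, ?_⟩
        intro hq
        rw [Sym2.congr_right] at hq
        exact hzy hq.symm
      · rw [h]
        right; rw [Sym2.eq_swap]
  have hnb'z : M'.neighborSet z ⊆ M.neighborSet z := by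
    intro b hb
    have hb' := (hadj' z b).mp hb
    rcases hb' with ⟨h1, _⟩ | h1
    · exact h1
    · rw [Sym2.eq_iff] at h1
      rcases h1 with ⟨h3, _⟩ | ⟨h3, _⟩
      · exact absurd h3 hzv0
      · exact absurd h3 hzw
  have hsame : ∀ a : V, a ≠ v0 → a ≠ w → a ≠ z → ∀ b : V, (M'.Adj a b ↔ M.Adj a b) := by
    intro a ha1 ha2 ha3 b
    rw [hadj']
    constructor
    · rintro (⟨h1, _⟩ | h1)
      · exact h1
      · rw [Sym2.eq_iff] at h1
        rcases h1 with ⟨h3, _⟩ | ⟨h3, _⟩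
        · exact absurd h3 ha1
        · exact absurd h3 ha2
    · intro h1
      refine Or.inl ⟨h1, ?_⟩
      intro hq
      rw [Sym2.eq_iff] at hq
      rcases hq with ⟨h3, _⟩ | ⟨h3, _⟩
      · exact ha2 h3
      · exact ha3 h3
  -- degree bound for M'
  have hu0w : u0 ≠ w := fun h => hwu0 h.symm
  have hdeg' : ∀ v : V, (M'.neighborSet v).ncard ≤ 2 := by
    intro v
    by_cases hv1 : v = v0
    · subst hv1
      rw [hnb'v0, Set.ncard_pair hu0w]
    · by_cases hv2 : v = w
      · subst hv2
        rw [hnb'w, Set.ncard_pair (fun h => hyv0 h)]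
      · by_cases hv3 : v = z
        · subst hv3
          exact le_trans (Set.ncard_le_ncard hnb'z (Set.toFinite _)) (le_of_eq hzz)
        · have : M'.neighborSet v = M.neighborSet v := by
            ext b
            exact hsame v hv1 hv2 hv3 b
          rw [this]
          exact hdeg v
  -- M' ≤ G
  have hM'G : M' ≤ G := by
    intro a b hab
    rw [hadj'] at hab
    rcases hab with ⟨h1, _⟩ | h1
    · exact hMG h1
    · rw [Sym2.eq_iff] at h1
      rcases h1 with ⟨rfl, rfl⟩ | ⟨rfl, rfl⟩
      · exact hadj
      · exact hadj.symm
  -- edge count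
  have he2notM : s(v0, w) ∉ M.edgeSet := by
    rw [mem_edgeSet]
    intro h
    exact hwu0 (hadjv0 w h)
  have he1M : s(w, z) ∈ M.edgeSet := hMwz
  have hedgeSet' : M'.edgeSet = insert s(v0, w) (M.edgeSet \ {s(w, z)}) := by
    rw [hM'def, edgeSet_fromEdgeSet]
    ext e
    simp only [Set.mem_diff, Set.mem_union, Set.mem_singleton_iff, Set.mem_insert_iff,
      Set.mem_setOf_eq]
    constructor
    · rintro ⟨h1 | h1, _⟩
      · exact Or.inr h1
      · exact Or.inl h1
    · rintro (rfl | h1)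
      · exact ⟨Or.inr rfl, by rw [Sym2.diagSet_eq_setOfPred_isDiag, Set.mem_setOf_eq, Sym2.mk_isDiag_iff]; exact fun h => hwv0 h.symm⟩
      · refine ⟨Or.inl h1, ?_⟩
        intro hd
        exact M.not_isDiag_of_mem_edgeSet h1.1 hd
  have hec : M'.edgeSet.ncard = M.edgeSet.ncard := by
    rw [hedgeSet', Set.ncard_insert_of_notMem (fun h => he2notM h.1) (Set.toFinite _),
      Set.ncard_diff_singleton_add_one he1M (Set.toFinite _)]
  -- M' is a maximum 2-matching
  have hM'max : G.IsMaxTwoMatching M' := by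
    refine ⟨⟨hM'G, hdeg'⟩, fun N hN => ?_⟩
    rw [hec]
    exact hmax N hN
  refine ⟨M', hM'max, ?_⟩
  -- counting small components
  have hsuppfin : ∀ c : M'.ConnectedComponent, c.supp.Finite := fun c => Set.toFinite _
  -- a component containing three distinct mutually reachable vertices is big
  have hthree : ∀ (a b c : V) (c' : M'.ConnectedComponent), a ∈ c'.supp →
      M'.Reachable a b → M'.Reachable a c → a ≠ b → a ≠ c → b ≠ c →
      ¬ c'.supp.ncard ≤ 2 := by
    intro a b c c' ha hab hac h1 h2 h3 hle
    have hbm : b ∈ c'.supp := by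
      rw [ConnectedComponent.mem_supp_iff] at ha ⊢
      rw [← ha, ConnectedComponent.eq]
      exact hab.symm
    have hcm : c ∈ c'.supp := by
      rw [ConnectedComponent.mem_supp_iff] at ha ⊢
      rw [← ha, ConnectedComponent.eq]
      exact hac.symm
    have hsub : ({a, b, c} : Set V) ⊆ c'.supp := by
      rintro x (rfl | rfl | rfl) <;> assumption
    have h3card : ({a, b, c} : Set V).ncard = 3 := by
      rw [Set.ncard_insert_of_notMem (by
        rintro (rfl | rfl); exact h1 rfl; exact h2 rfl) (Set.toFinite _),
        Set.ncard_pair h3]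
    have := Set.ncard_le_ncard hsub (hsuppfin c')
    omega
  -- small components of M' avoid v0, w, z (and u0)
  have havoid : ∀ c' : M'.ConnectedComponent, c'.supp.ncard ≤ 2 →
      ∀ v ∈ c'.supp, v ∉ ({v0, w, z} : Set V) := by
    intro c' hc' v hv hmem
    rcases hmem with rfl | rfl | rfl
    · exact hthree v u0 w c' hv hA1.reachable hA2.reachable hv0u0 (fun h => hwv0 h.symm)
        hu0w hc'
    · exact hthree v v0 u0 c' hv hA2.symm.reachable (hA2.symm.reachable.trans hA1.reachable)
        hwv0 hwu0 hv0u0 hc'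
    · exact hthree v t t' c' hv hA3.reachable (hA3.reachable.trans hA4.reachable)
        (fun h => htz h.symm) (fun h => ht'z h.symm) htt'ne hc'
  -- transfer: for a vertex in a small M'-component, M and M' reachability agree
  have hBadj : ∀ a b : V, a ∉ ({v0, w, z} : Set V) → (M.Adj a b ↔ M'.Adj a b) := by
    intro a b ha
    simp only [Set.mem_insert_iff, Set.mem_singleton_iff, not_or] at ha
    exact (hsame a ha.1 ha.2.1 ha.2.2 b).symm
  -- the injection from small M'-components to M-components
  set f : M'.ConnectedComponent → M.ConnectedComponent :=
    fun c' => M.connectedComponentMk (Quot.out c') with hfdef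
  have hout : ∀ c' : M'.ConnectedComponent, M'.connectedComponentMk (Quot.out c') = c' :=
    fun c' => Quot.out_eq c'
  have hkey : ∀ c' : M'.ConnectedComponent, c'.supp.ncard ≤ 2 →
      (f c').supp = c'.supp := by
    intro c' hc'
    have hxc : M'.connectedComponentMk (Quot.out c') = c' := hout c'
    have hxreach : ∀ v : V, M'.Reachable (Quot.out c') v → v ∉ ({v0, w, z} : Set V) := by
      intro v hv
      apply havoid c' hc'
      rw [ConnectedComponent.mem_supp_iff, ← hxc, ConnectedComponent.eq]
      exact hv.symm
    have hsupp : (M.connectedComponentMk (Quot.out c')).supp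
        = (M'.connectedComponentMk (Quot.out c')).supp := by
      ext v
      simp only [ConnectedComponent.mem_supp_iff, ConnectedComponent.eq]
      constructor
      · intro h
        exact ((aux_reach_transfer M M' _ hBadj (Quot.out c') hxreach v).mp h.symm).symm
      · intro h
        exact ((aux_reach_transfer M M' _ hBadj (Quot.out c') hxreach v).mpr h.symm).symm
    rw [hxc] at hsupp
    exact hsupp
  -- conclude
  rw [SimpleGraph.numSmallComponents, SimpleGraph.numSmallComponents]
  set S' : Set M'.ConnectedComponent := {c | c.supp.ncard ≤ 2} with hS'def
  set S : Set M.ConnectedComponent := {c | c.supp.ncard ≤ 2} with hSdef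
  have hcM : M.connectedComponentMk v0 ∈ S := by
    rw [hSdef, Set.mem_setOf_eq, hcomp, Set.ncard_pair hv0u0]
  have himg : f '' S' ⊆ S \ {M.connectedComponentMk v0} := by
    rintro c ⟨c', hc', rfl⟩
    rw [hS'def, Set.mem_setOf_eq] at hc'
    constructor
    · rw [hSdef, Set.mem_setOf_eq, hkey c' hc']
      exact hc'
    · rw [Set.mem_singleton_iff]
      intro h
      have hv0mem : v0 ∈ (f c').supp := by
        rw [h, ConnectedComponent.mem_supp_iff]
      rw [hkey c' hc'] at hv0mem
      exact havoid c' hc' v0 hv0mem (Set.mem_insert _ _)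
  have hinj : Set.InjOn f S' := by
    intro c1 h1 c2 h2 heq
    rw [hS'def, Set.mem_setOf_eq] at h1 h2
    have : c1.supp = c2.supp := by
      rw [← hkey c1 h1, ← hkey c2 h2, heq]
    exact ConnectedComponent.supp_injective this
  calc S'.ncard = (f '' S').ncard := (Set.ncard_image_of_injOn hinj).symm
    _ ≤ (S \ {M.connectedComponentMk v0}).ncard :=
        Set.ncard_le_ncard himg (Set.toFinite _)
    _ < S.ncard := Set.ncard_diff_singleton_lt_of_mem hcM (Set.toFinite _)
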